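/- Let β > 0 and set b := 1/(2√(2β)). Define V̂ : ℝ → ℝ by V̂(x) = b e^{−1} for x ≤ 0, V̂(x) = b e^{(x/b)−1} for 0 < x < b, and V̂(x) = x for x ≥ b. Then: (i) V̂ is continuous on ℝ and continuously differentiable on ℝ \ {0} (in particular the left and right derivatives at x = b both equal 1, i.e. smooth fit holds at b); (ii) (1/2)V̂''(x) − √(2β)·sgn(x)·V̂'(x) = 0 for every x ∈ (−∞,0) ∪ (0,b); (iii) the one-sided derivatives at 0 satisfy V̂'(0+) − V̂'(0−) = 2√(2β)·V̂(0); (iv) V̂(x) ≥ max(x,0) for all x ∈ ℝ, with V̂(x) > x for every x < b and V̂(x) = x for every x ≥ b. -/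

import Mathlib

open MeasureTheory Set Real

/-- The candidate value function for the optimal stopping problem with a `Γ(1/2,β)` prior,
with stopping threshold `b`. -/
noncomputable def Vhat (b : ℝ) (x : ℝ) : ℝ :=
  if x ≤ 0 then b * Real.exp (-1)
  else if x < b then b * Real.exp (x / b - 1)
  else x

section Aux

variable {b x : ℝ}

lemma Vhat_nonpos (hx : x ≤ 0) : Vhat b x = b * Real.exp (-1) := if_pos hx

lemma Vhat_mid (hx : 0 < x) (hxb : x < b) : Vhat b x = b * Real.exp (x / b - 1) := by
  simp [Vhat, not_le.2 hx, hxb]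

lemma Vhat_ge (hb : 0 < b) (hx : b ≤ x) : Vhat b x = x := by
  have h1 : ¬ x ≤ 0 := not_le.2 (lt_of_lt_of_le hb hx)
  simp [Vhat, h1, not_lt.2 hx]

lemma Vhat_eq_F_on_Icc (hb : 0 < b) (hx : x ∈ Set.Icc 0 b) :
    Vhat b x = b * Real.exp (x / b - 1) := by
  rcases eq_or_lt_of_le hx.1 with h0 | h0
  · rw [← h0, Vhat_nonpos le_rfl]
    norm_num
  rcases eq_or_lt_of_le hx.2 with hb' | hb'
  · rw [hb', Vhat_ge hb le_rfl, div_self hb.ne']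
    simp
  · exact Vhat_mid h0 hb'

lemma hasDerivAt_F (hb : 0 < b) (x : ℝ) :
    HasDerivAt (fun y => b * Real.exp (y / b - 1)) (Real.exp (x / b - 1)) x := by
  have h : HasDerivAt (fun y : ℝ => y / b - 1) (1 / b) x := by
    simpa using ((hasDerivAt_id x).div_const b).sub_const 1
  have h3 := h.exp.const_mul b
  have e : b * (Real.exp (x / b - 1) * (1 / b)) = Real.exp (x / b - 1) := by
    rw [mul_comm (Real.exp _), ← mul_assoc, one_div, mul_inv_cancel₀ hb.ne', one_mul]
  rwa [e] at h3

/-- Derivative of `Vhat` on the negative half-line. -/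
lemma Vhat_hasDerivAt_neg (hx : x < 0) : HasDerivAt (Vhat b) 0 x := by
  have hev : Vhat b =ᶠ[nhds x] fun _ => b * Real.exp (-1) := by
    filter_upwards [Iio_mem_nhds hx] with y hy
    exact Vhat_nonpos (le_of_lt hy)
  exact (hasDerivAt_const x (b * Real.exp (-1))).congr_of_eventuallyEq hev

/-- Derivative of `Vhat` on `(0,b)`. -/
lemma Vhat_hasDerivAt_mid (hb : 0 < b) (h0 : 0 < x) (hxb : x < b) :
    HasDerivAt (Vhat b) (Real.exp (x / b - 1)) x := by
  have hev : Vhat b =ᶠ[nhds x] fun y => b * Real.exp (y / b - 1) := by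
    filter_upwards [Ioo_mem_nhds h0 hxb] with y hy
    exact Vhat_mid hy.1 hy.2
  exact (hasDerivAt_F hb x).congr_of_eventuallyEq hev

/-- Derivative of `Vhat` on `(b,∞)`. -/
lemma Vhat_hasDerivAt_top (hb : 0 < b) (hxb : b < x) : HasDerivAt (Vhat b) 1 x := by
  have hev : Vhat b =ᶠ[nhds x] fun y => y := by
    filter_upwards [Ioi_mem_nhds hxb] with y hy
    exact Vhat_ge hb (le_of_lt hy)
  exact (hasDerivAt_id x).congr_of_eventuallyEq hev

lemma Vhat_hasDerivWithinAt_Iic (hb : 0 < b) :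
    HasDerivWithinAt (Vhat b) 1 (Set.Iic b) b := by
  have h := ((hasDerivAt_F hb b).hasDerivWithinAt (s := Set.Iic b))
  have h2 : HasDerivWithinAt (fun y => b * Real.exp (y / b - 1)) 1 (Set.Iic b) b := by
    have : Real.exp (b / b - 1) = 1 := by rw [div_self hb.ne']; simp
    rwa [this] at h
  refine h2.congr_of_eventuallyEq ?_ ?_
  · filter_upwards [inter_mem_nhdsWithin (Set.Iic b) (Ioi_mem_nhds hb)] with y hy
    exact Vhat_eq_F_on_Icc hb ⟨le_of_lt hy.2, hy.1⟩
  · exact Vhat_eq_F_on_Icc hb ⟨le_of_lt hb, le_rfl⟩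

lemma Vhat_hasDerivWithinAt_Ici (hb : 0 < b) :
    HasDerivWithinAt (Vhat b) 1 (Set.Ici b) b := by
  refine (hasDerivWithinAt_id b (Set.Ici b)).congr (fun y hy => Vhat_ge hb hy)
    (Vhat_ge hb le_rfl)

lemma Vhat_hasDerivAt_b (hb : 0 < b) : HasDerivAt (Vhat b) 1 b := by
  have h := (Vhat_hasDerivWithinAt_Iic hb).union (Vhat_hasDerivWithinAt_Ici hb)
  rw [Set.Iic_union_Ici] at h
  exact h.hasDerivAt (by simp)

/-- The global derivative formula on `(0,∞)`. -/
lemma Vhat_hasDerivAt_pos (hb : 0 < b) (h0 : 0 < x) :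
    HasDerivAt (Vhat b) (Real.exp (min x b / b - 1)) x := by
  rcases lt_trichotomy x b with h | h | h
  · rw [min_eq_left (le_of_lt h)]
    exact Vhat_hasDerivAt_mid hb h0 h
  · subst h
    have : Real.exp (min x x / x - 1) = 1 := by
      rw [min_self, div_self hb.ne']; simp
    rw [this]
    exact Vhat_hasDerivAt_b hb
  · have : Real.exp (min x b / b - 1) = 1 := by
      rw [min_eq_right (le_of_lt h), div_self hb.ne']; simp
    rw [this]
    exact Vhat_hasDerivAt_top hb h

lemma Vhat_deriv_pos (hb : 0 < b) (h0 : 0 < x) :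
    deriv (Vhat b) x = Real.exp (min x b / b - 1) :=
  (Vhat_hasDerivAt_pos hb h0).deriv

lemma Vhat_deriv_neg (hx : x < 0) : deriv (Vhat b) x = 0 :=
  (Vhat_hasDerivAt_neg hx).deriv

end Aux

/-- properties of the candidate value function `V̂` with `b = 1/(2√(2β))`:
(i) continuity on `ℝ`, continuous differentiability off `0`, smooth fit at `b`;
(ii) the ODE `(1/2)V̂'' − √(2β) sgn(x) V̂' = 0` on `(−∞,0) ∪ (0,b)`;
(iii) the elastic-killing derivative-jump condition at `0`;
(iv) `V̂ ≥ max(·,0)`, with strict inequality `V̂(x) > x` for `x < b` and equality for `x ≥ b`. -/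
theorem gamma_value_function_properties (β b : ℝ) (hβ : 0 < β)
    (hb : b = 1 / (2 * Real.sqrt (2 * β))) :
    Continuous (Vhat b) ∧
    ContDiffOn ℝ 1 (Vhat b) ({(0:ℝ)}ᶜ) ∧
    HasDerivWithinAt (Vhat b) 1 (Set.Iic b) b ∧
    HasDerivWithinAt (Vhat b) 1 (Set.Ici b) b ∧
    (∀ x : ℝ, (x < 0 ∨ (0 < x ∧ x < b)) →
      (1/2) * deriv (deriv (Vhat b)) x
        - Real.sqrt (2 * β) * Real.sign x * deriv (Vhat b) x = 0) ∧
    (∃ dplus dminus : ℝ,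
      HasDerivWithinAt (Vhat b) dplus (Set.Ici 0) 0 ∧
      HasDerivWithinAt (Vhat b) dminus (Set.Iic 0) 0 ∧
      dplus - dminus = 2 * Real.sqrt (2 * β) * Vhat b 0) ∧
    (∀ x : ℝ, max x 0 ≤ Vhat b x) ∧
    (∀ x : ℝ, x < b → x < Vhat b x) ∧
    (∀ x : ℝ, b ≤ x → Vhat b x = x) := by
  set s : ℝ := Real.sqrt (2 * β) with hs_def
  have hs : 0 < s := Real.sqrt_pos.2 (by linarith)
  have hbpos : 0 < b := by rw [hb]; positivity
  have hsb : 2 * s * b = 1 := by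
    rw [hb]; field_simp
  have hinvb : 1 / b = 2 * s := by
    rw [hb]; field_simp
  -- Continuity
  have hcont : Continuous (Vhat b) := by
    have heq : Vhat b = fun x => max (b * Real.exp (max 0 (min x b) / b - 1)) x := by
      funext x
      rcases le_or_gt x 0 with hx | hx
      · rw [Vhat_nonpos hx, min_eq_left (hx.trans hbpos.le), max_eq_left hx]
        have h1 : (0:ℝ) / b - 1 = -1 := by simp
        rw [h1, max_eq_left]
        nlinarith [Real.exp_pos (-1 : ℝ)]
      rcases lt_or_ge x b with hxb | hxb
      · rw [Vhat_mid hx hxb, min_eq_left hxb.le, max_eq_right hx.le, max_eq_left]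
        have h2 : x / b ≤ Real.exp (x / b - 1) := by
          have := Real.add_one_le_exp (x / b - 1)
          linarith
        calc x = b * (x / b) := by field_simp
        _ ≤ b * Real.exp (x / b - 1) := by
              exact mul_le_mul_of_nonneg_left h2 hbpos.le
      · rw [Vhat_ge hbpos hxb, min_eq_right hxb, max_eq_right hbpos.le, div_self hbpos.ne']
        simp [Real.exp_zero, max_eq_right hxb]
    rw [heq]
    fun_prop
  -- ContDiffOn
  have hcd : ContDiffOn ℝ 1 (Vhat b) ({(0:ℝ)}ᶜ) := by
    have hopen : IsOpen ({(0:ℝ)}ᶜ) := isOpen_compl_singleton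
    rw [show (1 : WithTop ℕ∞) = 0 + 1 from rfl, contDiffOn_succ_iff_deriv_of_isOpen hopen]
    have hgcont : Continuous fun y : ℝ => Real.exp (min y b / b - 1) := by fun_prop
    refine ⟨?_, by simp, ?_⟩
    · intro x hx
      rcases lt_or_gt_of_ne (by simpa using hx : x ≠ 0) with h | h
      · exact (Vhat_hasDerivAt_neg h).differentiableAt.differentiableWithinAt
      · exact (Vhat_hasDerivAt_pos hbpos h).differentiableAt.differentiableWithinAt
    · rw [contDiffOn_zero]
      intro x hx
      rcases lt_or_gt_of_ne (by simpa using hx : x ≠ 0) with h | h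
      · have hev : deriv (Vhat b) =ᶠ[nhds x] fun _ => (0:ℝ) := by
          filter_upwards [Iio_mem_nhds h] with y hy
          exact Vhat_deriv_neg hy
        exact (continuousAt_const.congr hev.symm).continuousWithinAt
      · have hev : deriv (Vhat b) =ᶠ[nhds x] fun y => Real.exp (min y b / b - 1) := by
          filter_upwards [Ioi_mem_nhds h] with y hy
          exact Vhat_deriv_pos hbpos hy
        exact (hgcont.continuousAt.congr hev.symm).continuousWithinAt
  refine ⟨hcont, hcd, Vhat_hasDerivWithinAt_Iic hbpos, Vhat_hasDerivWithinAt_Ici hbpos,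
    ?_, ?_, ?_, ?_, fun x hx => Vhat_ge hbpos hx⟩
  -- ODE
  · intro x hx
    rcases hx with h | ⟨h0, hxb⟩
    · have h1 : deriv (Vhat b) x = 0 := Vhat_deriv_neg h
      have h2 : deriv (deriv (Vhat b)) x = 0 := by
        have hev : deriv (Vhat b) =ᶠ[nhds x] fun _ => (0:ℝ) := by
          filter_upwards [Iio_mem_nhds h] with y hy
          exact Vhat_deriv_neg hy
        rw [hev.deriv_eq]; simp
      rw [h1, h2]; ring
    · have hsgn : Real.sign x = 1 := Real.sign_of_pos h0
      have h1 : deriv (Vhat b) x = Real.exp (x / b - 1) := by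
        rw [Vhat_deriv_pos hbpos h0, min_eq_left hxb.le]
      have h2 : deriv (deriv (Vhat b)) x = Real.exp (x / b - 1) * (2 * s) := by
        have hev : deriv (Vhat b) =ᶠ[nhds x] fun y => Real.exp (y / b - 1) := by
          filter_upwards [Ioo_mem_nhds h0 hxb] with y hy
          rw [Vhat_deriv_pos hbpos hy.1, min_eq_left hy.2.le]
        rw [hev.deriv_eq]
        have hF : HasDerivAt (fun y : ℝ => Real.exp (y / b - 1))
            (Real.exp (x / b - 1) * (1 / b)) x := by
          have h : HasDerivAt (fun y : ℝ => y / b - 1) (1 / b) x := by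
            simpa using ((hasDerivAt_id x).div_const b).sub_const 1
          exact h.exp
        rw [hF.deriv, hinvb]
      rw [h1, h2, hsgn]; ring
  -- Jump condition at 0
  · refine ⟨Real.exp (-1), 0, ?_, ?_, ?_⟩
    · have h := ((hasDerivAt_F hbpos 0).hasDerivWithinAt (s := Set.Ici 0))
      have h0 : (0:ℝ) / b - 1 = -1 := by simp
      rw [h0] at h
      refine h.congr_of_eventuallyEq ?_ ?_
      · filter_upwards [inter_mem_nhdsWithin (Set.Ici 0) (Iio_mem_nhds hbpos)] with y hy
        exact Vhat_eq_F_on_Icc hbpos ⟨hy.1, hy.2.le⟩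
      · exact Vhat_eq_F_on_Icc hbpos ⟨le_rfl, hbpos.le⟩
    · exact (hasDerivWithinAt_const 0 (Set.Iic 0) (b * Real.exp (-1))).congr
        (fun y hy => Vhat_nonpos hy) (Vhat_nonpos le_rfl)
    · rw [Vhat_nonpos le_rfl]
      calc Real.exp (-1) - 0 = (2 * s * b) * Real.exp (-1) := by rw [hsb]; ring
      _ = 2 * s * (b * Real.exp (-1)) := by ring
  -- max x 0 ≤ Vhat
  · intro x
    rcases le_or_gt x 0 with hx | hx
    · rw [Vhat_nonpos hx, max_eq_right hx]
      positivity
    rcases lt_or_ge x b with hxb | hxb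
    · rw [Vhat_mid hx hxb, max_eq_left hx.le]
      have h2 : x / b ≤ Real.exp (x / b - 1) := by
        have := Real.add_one_le_exp (x / b - 1); linarith
      calc x = b * (x / b) := by field_simp
      _ ≤ b * Real.exp (x / b - 1) := mul_le_mul_of_nonneg_left h2 hbpos.le
    · rw [Vhat_ge hbpos hxb, max_eq_left (le_trans hbpos.le hxb)]
  -- strict
  · intro x hxb
    rcases le_or_gt x 0 with hx | hx
    · rw [Vhat_nonpos hx]
      have := Real.exp_pos (-1 : ℝ)
      nlinarith
    · rw [Vhat_mid hx hxb]
      have hne : x / b - 1 ≠ 0 := by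
        have : x / b < 1 := (div_lt_one hbpos).2 hxb
        intro hc; rw [sub_eq_zero] at hc; rw [hc] at this; exact lt_irrefl _ this
      have h2 : x / b < Real.exp (x / b - 1) := by
        have := Real.add_one_lt_exp hne; linarith
      calc x = b * (x / b) := by field_simp
      _ < b * Real.exp (x / b - 1) := by
            exact mul_lt_mul_of_pos_left h2 hbpos
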